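/- Exact bias and variance of the scalar Kalman filter mean: for the scalar Kalman filter with initial covariance C₀ = γ²Σ/α > 0, for every n ≥ 1 one has E[m_n] − u† = (1 + A²Σn/α)^{−1}(m₀ − u†) and Var(m_n) = (A + α/(AΣn))^{−2} γ²/n. -/

import Mathlib

open MeasureTheory ProbabilityTheory Real
open scoped NNReal ENNReal

lemma gauss_m1 {b : ℝ} (hb : 0 < b) :
    ∫ x : ℝ, x * Real.exp (-b * x ^ 2) = 0 := by
  have hderiv : ∀ x : ℝ, HasDerivAt (fun y : ℝ => -(2 * b)⁻¹ * Real.exp (-b * y ^ 2))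
      (x * Real.exp (-b * x ^ 2)) x := by
    intro x
    have h1 : HasDerivAt (fun y : ℝ => -b * y ^ 2) (-b * (2 * x)) x := by
      simpa using ((hasDerivAt_pow 2 x).const_mul (-b))
    have h2 := (h1.exp).const_mul (-(2 * b)⁻¹)
    refine h2.congr_deriv ?_
    field_simp
  exact integral_eq_zero_of_hasDerivAt_of_integrable hderiv
    (integrable_mul_exp_neg_mul_sq hb) ((integrable_exp_neg_mul_sq hb).const_mul _)

lemma integrable_sq_mul_exp {b : ℝ} (hb : 0 < b) :
    Integrable (fun x : ℝ => x ^ 2 * Real.exp (-b * x ^ 2)) := by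
  have := integrable_rpow_mul_exp_neg_mul_sq hb (s := 2) (by norm_num)
  simpa [Real.rpow_natCast] using this

lemma gauss_m2 {b : ℝ} (hb : 0 < b) :
    ∫ x : ℝ, x ^ 2 * Real.exp (-b * x ^ 2) = (2 * b)⁻¹ * Real.sqrt (π / b) := by
  have hderiv : ∀ x : ℝ, HasDerivAt (fun y : ℝ => -(2 * b)⁻¹ * (y * Real.exp (-b * y ^ 2)))
      (x ^ 2 * Real.exp (-b * x ^ 2) - (2 * b)⁻¹ * Real.exp (-b * x ^ 2)) x := by
    intro x
    have h1 : HasDerivAt (fun y : ℝ => -b * y ^ 2) (-b * (2 * x)) x := by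
      simpa using ((hasDerivAt_pow 2 x).const_mul (-b))
    have h2 : HasDerivAt (fun y : ℝ => y * Real.exp (-b * y ^ 2))
        (1 * Real.exp (-b * x ^ 2) + x * (Real.exp (-b * x ^ 2) * (-b * (2 * x)))) x :=
      (hasDerivAt_id x).mul h1.exp
    have h3 := h2.const_mul (-(2 * b)⁻¹)
    refine h3.congr_deriv ?_
    field_simp
    ring
  have hint : Integrable (fun x : ℝ =>
      x ^ 2 * Real.exp (-b * x ^ 2) - (2 * b)⁻¹ * Real.exp (-b * x ^ 2)) :=
    (integrable_sq_mul_exp hb).sub ((integrable_exp_neg_mul_sq hb).const_mul _)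
  have h0 := integral_eq_zero_of_hasDerivAt_of_integrable hderiv hint
    ((integrable_mul_exp_neg_mul_sq hb).const_mul _)
  rw [integral_sub (integrable_sq_mul_exp hb) ((integrable_exp_neg_mul_sq hb).const_mul _),
    MeasureTheory.integral_const_mul, integral_gaussian, sub_eq_zero] at h0
  rw [h0]

lemma gaussianPDFReal_zero_eq {v : ℝ≥0} (hv : v ≠ 0) (x : ℝ) :
    gaussianPDFReal 0 v x = (Real.sqrt (2 * π * v))⁻¹ * Real.exp (-(2 * (v : ℝ))⁻¹ * x ^ 2) := by
  have hv' : (0 : ℝ) < v := lt_of_le_of_ne v.coe_nonneg (by exact_mod_cast hv.symm)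
  rw [gaussianPDFReal]
  congr 1
  rw [sub_zero]
  congr 1
  field_simp

section Gauss
variable {v : ℝ≥0} (hv : v ≠ 0)

lemma hv_pos (hv : v ≠ 0) : (0 : ℝ) < v :=
  lt_of_le_of_ne v.coe_nonneg (by exact_mod_cast hv.symm)

lemma gauss_integral_eq (hv : v ≠ 0) (g : ℝ → ℝ) :
    ∫ x, g x ∂(gaussianReal 0 v) = ∫ x, gaussianPDFReal 0 v x * g x := by
  rw [gaussianReal_of_var_ne_zero _ hv, gaussianPDF_def]
  have h : (fun x => ENNReal.ofReal (gaussianPDFReal 0 v x))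
      = fun x => ((Real.toNNReal (gaussianPDFReal 0 v x) : ℝ≥0) : ℝ≥0∞) := rfl
  rw [h, integral_withDensity_eq_integral_smul
    ((measurable_gaussianPDFReal 0 v).real_toNNReal) g]
  congr 1
  ext x
  simp [NNReal.smul_def, Real.coe_toNNReal _ (gaussianPDFReal_nonneg 0 v x)]

lemma gauss_integrable_iff (hv : v ≠ 0) (g : ℝ → ℝ) :
    Integrable g (gaussianReal 0 v) ↔
      Integrable (fun x => gaussianPDFReal 0 v x * g x) volume := by
  rw [gaussianReal_of_var_ne_zero _ hv, gaussianPDF_def]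
  have h : (fun x => ENNReal.ofReal (gaussianPDFReal 0 v x))
      = fun x => ((Real.toNNReal (gaussianPDFReal 0 v x) : ℝ≥0) : ℝ≥0∞) := rfl
  rw [h, integrable_withDensity_iff_integrable_smul
    ((measurable_gaussianPDFReal 0 v).real_toNNReal)]
  constructor <;> intro hh <;> refine hh.congr (Filter.Eventually.of_forall fun x => ?_) <;>
    simp [NNReal.smul_def, Real.coe_toNNReal _ (gaussianPDFReal_nonneg 0 v x)]

include hv

lemma gauss_int_id : ∫ x, x ∂(gaussianReal 0 v) = 0 := by
  have hb : (0:ℝ) < (2 * (v : ℝ))⁻¹ := by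
    have := hv_pos hv; positivity
  rw [gauss_integral_eq hv]
  calc ∫ x, gaussianPDFReal 0 v x * x
      = ∫ x, (Real.sqrt (2 * π * v))⁻¹ * (x * Real.exp (-(2 * (v:ℝ))⁻¹ * x ^ 2)) := by
        congr 1; ext x; rw [gaussianPDFReal_zero_eq hv]; ring
    _ = 0 := by rw [MeasureTheory.integral_const_mul, gauss_m1 hb, mul_zero]

lemma gauss_int_sq : ∫ x, x ^ 2 ∂(gaussianReal 0 v) = v := by
  have hvp := hv_pos hv
  have hb : (0:ℝ) < (2 * (v : ℝ))⁻¹ := by positivity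
  rw [gauss_integral_eq hv]
  have : ∫ x, gaussianPDFReal 0 v x * x ^ 2
      = (Real.sqrt (2 * π * v))⁻¹ * ((2 * (2 * (v:ℝ))⁻¹)⁻¹ *
          Real.sqrt (π / (2 * (v:ℝ))⁻¹)) := by
    rw [← gauss_m2 hb, ← MeasureTheory.integral_const_mul]
    congr 1; ext x; rw [gaussianPDFReal_zero_eq hv]; ring
  rw [this]
  have h1 : (2 * (2 * (v:ℝ))⁻¹)⁻¹ = v := by field_simp
  have h2 : π / (2 * (v:ℝ))⁻¹ = 2 * π * v := by field_simp
  rw [h1, h2]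
  have h3 : Real.sqrt (2 * π * v) ≠ 0 := by
    rw [Real.sqrt_ne_zero']
    positivity
  field_simp

lemma gauss_integrable_id : Integrable (fun x : ℝ => x) (gaussianReal 0 v) := by
  rw [gauss_integrable_iff hv]
  have hb : (0:ℝ) < (2 * (v : ℝ))⁻¹ := by have := hv_pos hv; positivity
  have : (fun x => gaussianPDFReal 0 v x * x)
      = fun x => (Real.sqrt (2 * π * v))⁻¹ * (x * Real.exp (-(2 * (v:ℝ))⁻¹ * x ^ 2)) := by
    ext x; rw [gaussianPDFReal_zero_eq hv]; ring
  rw [this]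
  exact (integrable_mul_exp_neg_mul_sq hb).const_mul _

lemma gauss_integrable_sq : Integrable (fun x : ℝ => x ^ 2) (gaussianReal 0 v) := by
  rw [gauss_integrable_iff hv]
  have hb : (0:ℝ) < (2 * (v : ℝ))⁻¹ := by have := hv_pos hv; positivity
  have : (fun x => gaussianPDFReal 0 v x * x ^ 2)
      = fun x => (Real.sqrt (2 * π * v))⁻¹ * (x ^ 2 * Real.exp (-(2 * (v:ℝ))⁻¹ * x ^ 2)) := by
    ext x; rw [gaussianPDFReal_zero_eq hv]; ring
  rw [this]
  exact (integrable_sq_mul_exp hb).const_mul _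

lemma gauss_memLp_id : MemLp (fun x : ℝ => x) 2 (gaussianReal 0 v) :=
  (memLp_two_iff_integrable_sq aestronglyMeasurable_id).mpr
    (by simpa [Pi.pow_apply] using gauss_integrable_sq hv)

end Gauss


open MeasureTheory ProbabilityTheory

/-- Exact bias and variance of the scalar Kalman filter mean: for every `n ≥ 1`,
`E[m_n] − u† = (1 + A²Σn/α)⁻¹ (m₀ − u†)` and
`Var(m_n) = (A + α/(AΣn))⁻² γ²/n`. -/
theorem scalar_kalman_exact_bias_variance
    {Ω : Type*} [MeasurableSpace Ω] (μ : Measure Ω) [IsProbabilityMeasure μ]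
    (A Sg α γ udag m0 : ℝ) (hA : A ≠ 0) (hSg : 0 < Sg) (hα : 0 < α) (hγ : 0 < γ)
    (η : ℕ → Ω → ℝ) (hmeas : ∀ n, Measurable (η n))
    (hindep : iIndepFun η μ)
    (hgauss : ∀ n, 1 ≤ n → Measure.map (η n) μ = gaussianReal 0 (Real.toNNReal (γ ^ 2)))
    (y : ℕ → Ω → ℝ) (hy : ∀ n, 1 ≤ n → y n = fun ω => A * udag + η n ω)
    (C K : ℕ → ℝ) (m : ℕ → Ω → ℝ)
    (hC0 : C 0 = γ ^ 2 * Sg / α) (hm0 : m 0 = fun _ => m0)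
    (hK : ∀ n : ℕ, K (n + 1) = C n * A / (A ^ 2 * C n + γ ^ 2))
    (hm : ∀ n : ℕ, m (n + 1) =
      fun ω => K (n + 1) * y (n + 1) ω + (1 - K (n + 1) * A) * m n ω)
    (hC : ∀ n : ℕ, C (n + 1) = (1 - K (n + 1) * A) * C n) :
    ∀ n : ℕ, 1 ≤ n →
      (∫ ω, m n ω ∂μ) - udag = (1 + A ^ 2 * Sg * (n : ℝ) / α)⁻¹ * (m0 - udag) ∧
        variance (m n) μ = ((A + α / (A * Sg * (n : ℝ)))⁻¹) ^ 2 * (γ ^ 2 / (n : ℝ)) := by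
  have hA2 : 0 < A ^ 2 := by positivity
  have hγ2 : (0:ℝ) < γ ^ 2 := by positivity
  set d : ℕ → ℝ := fun n => α + A ^ 2 * Sg * n with hd_def
  have hd : ∀ n : ℕ, 0 < d n := fun n => by
    have : (0:ℝ) ≤ A ^ 2 * Sg * n := by positivity
    simp only [hd_def]; linarith
  have hdd : ∀ n : ℕ, d (n + 1) = d n + A ^ 2 * Sg := by
    intro n; simp only [hd_def]; push_cast; ring
  -- closed form for C
  have hCn : ∀ n : ℕ, C n = γ ^ 2 * Sg / d n := by
    intro n
    induction n with
    | zero => simp [hd_def, hC0]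
    | succ n ih =>
      have h1 := (hd n).ne'
      have h2 : d n + A ^ 2 * Sg ≠ 0 := by rw [← hdd n]; exact (hd (n+1)).ne'
      rw [hC n, hK n, ih, hdd n]
      have h3 : A ^ 2 * (γ ^ 2 * Sg / d n) + γ ^ 2 ≠ 0 := by
        have : 0 < A ^ 2 * (γ ^ 2 * Sg / d n) := by
          have := hd n; positivity
        linarith
      have h4 : Sg * A ^ 2 + d n ≠ 0 := by intro h; apply (hd (n+1)).ne'; rw [hdd n]; linarith
      have h5 : d n + Sg * A ^ 2 ≠ 0 := by intro h; apply (hd (n+1)).ne'; rw [hdd n]; linarith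
      have h6 : A ^ 2 * Sg + d n ≠ 0 := by intro h; apply (hd (n+1)).ne'; rw [hdd n]; linarith
      field_simp
      ring
  have hKn : ∀ n : ℕ, K (n + 1) = A * Sg / d (n + 1) := by
    intro n
    have h1 := (hd n).ne'
    have h2 : d n + A ^ 2 * Sg ≠ 0 := by rw [← hdd n]; exact (hd (n+1)).ne'
    rw [hK n, hCn n, hdd n]
    have h3 : A ^ 2 * (γ ^ 2 * Sg / d n) + γ ^ 2 ≠ 0 := by
      have : 0 < A ^ 2 * (γ ^ 2 * Sg / d n) := by have := hd n; positivity
      linarith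
    field_simp
    ring
  have hfrac : ∀ n : ℕ, 1 - K (n + 1) * A = d n / d (n + 1) := by
    intro n
    have h2 := (hd (n+1)).ne'
    rw [hKn n, eq_div_iff h2, sub_mul, one_mul, hdd n]
    have h3 : d n + A ^ 2 * Sg ≠ 0 := by rw [← hdd n]; exact h2
    field_simp
    ring
  -- closed form for m
  have hmn : ∀ n : ℕ, m n = fun ω =>
      (α * m0 + A ^ 2 * Sg * n * udag) / d n
        + (A * Sg / d n) * ∑ k ∈ Finset.Icc 1 n, η k ω := by
    intro n
    induction n with
    | zero =>
      funext ω
      simp [hm0, hd_def, hα.ne']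
    | succ n ih =>
      funext ω
      rw [hm n]
      simp only [hy (n+1) (by omega : 1 ≤ n + 1), hfrac n, hKn n, ih,
        Finset.sum_Icc_succ_top (by omega : 1 ≤ n + 1)]
      have h1 := (hd n).ne'
      have h2 := (hd (n+1)).ne'
      have h3 := hdd n
      push_cast [h3]
      have h7 : d n + A ^ 2 * Sg ≠ 0 := by rw [← h3]; exact h2
      have h4 : Sg * A ^ 2 + d n ≠ 0 := by intro h; apply (hd (n+1)).ne'; rw [hdd n]; linarith
      have h5 : d n + Sg * A ^ 2 ≠ 0 := by intro h; apply (hd (n+1)).ne'; rw [hdd n]; linarith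
      have h6 : A ^ 2 * Sg + d n ≠ 0 := by intro h; apply (hd (n+1)).ne'; rw [hdd n]; linarith
      field_simp
      ring
  -- main part
  intro n hn
  set v : ℝ≥0 := Real.toNNReal (γ ^ 2) with hv_def
  have hv : v ≠ 0 := by
    simp only [hv_def, ne_eq, Real.toNNReal_eq_zero, not_le]
    exact hγ2
  have hvv : (v : ℝ) = γ ^ 2 := Real.coe_toNNReal _ hγ2.le
  -- facts about each η k, 1 ≤ k
  have hMem : ∀ k, 1 ≤ k → MemLp (η k) 2 μ := by
    intro k hk
    have := (memLp_map_measure_iff (f := η k) (g := fun x : ℝ => x)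
      aestronglyMeasurable_id (hmeas k).aemeasurable).mp
      (by rw [hgauss k hk]; exact gauss_memLp_id hv)
    exact this
  have hInt : ∀ k, 1 ≤ k → Integrable (η k) μ := fun k hk =>
    (hMem k hk).integrable one_le_two
  have hEη : ∀ k, 1 ≤ k → ∫ ω, η k ω ∂μ = 0 := by
    intro k hk
    have h := integral_map (μ := μ) (φ := η k) (f := fun x : ℝ => x)
      (hmeas k).aemeasurable aestronglyMeasurable_id
    rw [hgauss k hk, gauss_int_id hv] at h
    exact h.symm
  have hE2η : ∀ k, 1 ≤ k → ∫ ω, (η k ω) ^ 2 ∂μ = γ ^ 2 := by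
    intro k hk
    have h := integral_map (μ := μ) (φ := η k) (f := fun x : ℝ => x ^ 2)
      (hmeas k).aemeasurable (measurable_id.pow_const 2).aestronglyMeasurable
    rw [hgauss k hk, gauss_int_sq hv, hvv] at h
    exact h.symm
  have hVarη : ∀ k, 1 ≤ k → variance (η k) μ = γ ^ 2 := by
    intro k hk
    rw [variance_eq_sub (hMem k hk), hEη k hk, zero_pow two_ne_zero, sub_zero]
    simpa [Pi.pow_apply] using hE2η k hk
  -- the sum S
  set S : Ω → ℝ := ∑ k ∈ Finset.Icc 1 n, η k with hS_def
  have hSapp : ∀ ω, S ω = ∑ k ∈ Finset.Icc 1 n, η k ω := by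
    intro ω; simp [hS_def]
  have hSMem : MemLp S 2 μ :=
    memLp_finset_sum' _ (fun k hk => hMem k (Finset.mem_Icc.mp hk).1)
  have hSInt : Integrable S μ := hSMem.integrable one_le_two
  have hES : ∫ ω, S ω ∂μ = 0 := by
    simp only [hS_def, Finset.sum_apply]
    rw [integral_finset_sum _ (fun k hk => hInt k (Finset.mem_Icc.mp hk).1)]
    exact Finset.sum_eq_zero fun k hk => hEη k (Finset.mem_Icc.mp hk).1
  have hVarS : variance S μ = n * γ ^ 2 := by
    rw [hS_def, IndepFun.variance_sum
      (fun k hk => hMem k (Finset.mem_Icc.mp hk).1)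
      (fun i _ j _ hij => hindep.indepFun hij)]
    rw [Finset.sum_congr rfl (fun k hk => hVarη k (Finset.mem_Icc.mp hk).1)]
    rw [Finset.sum_const, Nat.card_Icc]
    simp [nsmul_eq_mul]
  -- mean of m n
  set a : ℝ := (α * m0 + A ^ 2 * Sg * n * udag) / d n with ha_def
  set c : ℝ := A * Sg / d n with hc_def
  have hmn' : m n = fun ω => a + c * S ω := by
    rw [hmn n]; funext ω; rw [hSapp]
  have hEm : ∫ ω, m n ω ∂μ = a := by
    rw [hmn']
    rw [integral_add (integrable_const a) (hSInt.const_mul c),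
      integral_const, MeasureTheory.integral_const_mul, hES]
    simp
  have hmnMem : MemLp (m n) 2 μ := by
    rw [hmn']
    have : (fun ω => a + c * S ω) = (fun _ => a) + fun ω => c * S ω := rfl
    rw [this]
    exact (memLp_const a).add (hSMem.const_mul c)
  have hVarm : variance (m n) μ = c ^ 2 * (n * γ ^ 2) := by
    have h1 : variance (m n) μ = ∫ ω, ((m n - fun _ => ∫ ω', m n ω' ∂μ) ^ (2:ℕ) : Ω → ℝ) ω ∂μ :=
      variance_eq_integral hmnMem.aestronglyMeasurable.aemeasurable
    have h2 : ∀ ω, (((m n - fun _ => ∫ ω', m n ω' ∂μ) ^ (2:ℕ) : Ω → ℝ)) ω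
        = c ^ 2 * (S ω) ^ 2 := by
      intro ω
      simp only [Pi.pow_apply, Pi.sub_apply]
      rw [hEm]
      simp only [hmn']
      ring
    have h3 : ∫ ω, (S ω) ^ 2 ∂μ = variance S μ := by
      rw [variance_eq_sub hSMem, hES, zero_pow two_ne_zero, sub_zero]
      exact integral_congr_ae (Filter.Eventually.of_forall fun ω => by simp)
    rw [h1, integral_congr_ae (Filter.Eventually.of_forall h2),
      MeasureTheory.integral_const_mul, h3, hVarS]
  -- conclude
  have hne : (n : ℝ) ≠ 0 := by
    have : (0:ℝ) < n := by exact_mod_cast hn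
    exact this.ne'
  have hdn := (hd n).ne'
  constructor
  · rw [hEm, ha_def]
    have hδ : 1 + A ^ 2 * Sg * (n:ℝ) / α = d n / α := by
      simp only [hd_def]; field_simp
    rw [hδ]
    rw [inv_div]
    field_simp
    ring
  · rw [hVarm, hc_def]
    have hδ : A + α / (A * Sg * (n:ℝ)) = d n / (A * Sg * n) := by
      simp only [hd_def]; field_simp; ring
    rw [hδ, inv_div]
    field_simp
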